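/- Let d, r be integers with 0 < r < d, set n = d + r, and let A = (x_1,…,x_n) ∈ Γ_n^d with x_1 ≤ x_2 ≤ … ≤ x_n. If i is such that 2 ≤ x_i ≤ r, then per(A) ≤ max{ per_i^+(A), per_i^−(A) }. -/

import Mathlib

/-- The permanent of an `n × n` matrix: `per(A) = ∑_{σ ∈ S_n} ∏_i A i (σ i)`. -/
def permanent {n : ℕ}  (A : Matrix (Fin n) (Fin n) ℕ) : ℕ :=
  ∑ σ : Equiv.Perm (Fin n), ∏ i, A i (σ i)

/-- The `(0,1)`-matrix determined by the configuration `x` (1-indexed starting columns):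
entry `(i,j)` (with `j : Fin n` representing column `j+1`) is `1` iff
`x i ≤ j+1 ≤ x i + d - 1`. -/
def confMatrix (n d : ℕ) (x : Fin n → ℕ) : Matrix (Fin n) (Fin n) ℕ :=
  fun i j => if x i ≤ (j : ℕ) + 1 ∧ (j : ℕ) + 1 ≤ x i + d - 1 then 1 else 0

/-- A valid configuration for `Γ_n^d`: `1 ≤ x i ≤ n - d + 1` for all `i`. -/
def ValidConf (n d : ℕ) (x : Fin n → ℕ) : Prop :=
  ∀ i, 1 ≤ x i ∧ x i ≤ n - d + 1

/-- Membership in `Γ_n^d`: the set of `n × n` `(0,1)`-matrices each of whose rows has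
exactly `d` ones forming a contiguous block. -/
def IsGamma (n d : ℕ) (A : Matrix (Fin n) (Fin n) ℕ) : Prop :=
  ∃ x : Fin n → ℕ, ValidConf n d x ∧ A = confMatrix n d x

/-- `i^* = max { k : x k = x i }`. -/
def istar {n : ℕ} (x : Fin n → ℕ) (i : Fin n) : Fin n :=
  (Finset.univ.filter fun k => x k = x i).max' ⟨i, by simp⟩

/-- `i_* = min { k : x k = x i }`. -/
def isubstar {n : ℕ} (x : Fin n → ℕ) (i : Fin n) : Fin n :=
  (Finset.univ.filter fun k => x k = x i).min' ⟨i, by simp⟩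

/-- `per_i^+`: the permanent of the configuration obtained by moving the non-zero block of
row `i^*` one step to the right. -/
def perPlus (n d : ℕ) (x : Fin n → ℕ) (i : Fin n) : ℕ :=
  permanent (confMatrix n d (Function.update x (istar x i) (x (istar x i) + 1)))

/-- `per_i^-`: the permanent of the configuration obtained by moving the non-zero block of
row `i_*` one step to the left. -/
def perMinus (n d : ℕ) (x : Fin n → ℕ) (i : Fin n) : ℕ :=
  permanent (confMatrix n d (Function.update x (isubstar x i) (x (isubstar x i) - 1)))

lemma per_card (n d : ℕ) (y : Fin n → ℕ) :
    permanent (confMatrix n d y) =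
      (Finset.univ.filter fun σ : Equiv.Perm (Fin n) =>
        ∀ k, y k ≤ (σ k : ℕ) + 1 ∧ (σ k : ℕ) + 1 ≤ y k + d - 1).card := by
  rw [Finset.card_filter]
  refine Finset.sum_congr rfl fun σ _ => ?_
  unfold confMatrix
  rw [Finset.prod_boole]
  simp

set_option maxHeartbeats 2000000 in
/-- For `A = (x₁,…,x_n) ∈ Γ_n^d`, `n = d + r`, `0 < r < d`, with `x₁ ≤ … ≤ x_n`:
if `2 ≤ x i ≤ r` then `per(A) ≤ max { per_i^+(A), per_i^-(A) }`. -/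
theorem per_le_max_push (d r : ℕ) (hr : 0 < r) (hrd : r < d)
    (x : Fin (d + r) → ℕ) (hx : ValidConf (d + r) d x) (hmono : Monotone x)
    (i : Fin (d + r)) (h2 : 2 ≤ x i) (hir : x i ≤ r) :
    permanent (confMatrix (d + r) d x) ≤
      max (perPlus (d + r) d x i) (perMinus (d + r) d x i) := by
  set q := istar x i with hq
  set p := isubstar x i with hp
  have hxq : x q = x i := by
    have := Finset.max'_mem (Finset.univ.filter fun k => x k = x i) ⟨i, by simp⟩
    exact (Finset.mem_filter.mp this).2
  have hxp : x p = x i := by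
    have := Finset.min'_mem (Finset.univ.filter fun k => x k = x i) ⟨i, by simp⟩
    exact (Finset.mem_filter.mp this).2
  set c := x i with hc
  -- columns
  obtain ⟨ja, hja⟩ : ∃ j : Fin (d + r), (j : ℕ) = c - 2 := ⟨⟨c - 2, by omega⟩, rfl⟩
  obtain ⟨jb, hjb⟩ : ∃ j : Fin (d + r), (j : ℕ) = c - 1 := ⟨⟨c - 1, by omega⟩, rfl⟩
  obtain ⟨jt, hjt⟩ : ∃ j : Fin (d + r), (j : ℕ) = c + d - 2 := ⟨⟨c + d - 2, by omega⟩, rfl⟩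
  obtain ⟨ju, hju⟩ : ∃ j : Fin (d + r), (j : ℕ) = c + d - 1 := ⟨⟨c + d - 1, by omega⟩, rfl⟩
  set S := (Finset.univ.filter fun σ : Equiv.Perm (Fin (d + r)) =>
      ∀ k, x k ≤ (σ k : ℕ) + 1 ∧ (σ k : ℕ) + 1 ≤ x k + d - 1) with hS
  set xP := Function.update x q (x q + 1) with hxP
  set xM := Function.update x p (x p - 1) with hxM
  set Sp := (Finset.univ.filter fun σ : Equiv.Perm (Fin (d + r)) =>
      ∀ k, xP k ≤ (σ k : ℕ) + 1 ∧ (σ k : ℕ) + 1 ≤ xP k + d - 1) with hSp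
  set Sm := (Finset.univ.filter fun σ : Equiv.Perm (Fin (d + r)) =>
      ∀ k, xM k ≤ (σ k : ℕ) + 1 ∧ (σ k : ℕ) + 1 ≤ xM k + d - 1) with hSm
  have hperS : permanent (confMatrix (d + r) d x) = S.card := per_card _ _ _
  have hperP : perPlus (d + r) d x i = Sp.card := per_card _ _ _
  have hperM : perMinus (d + r) d x i = Sm.card := per_card _ _ _
  have hvalid : ∀ m, 1 ≤ x m ∧ x m ≤ r + 1 := by
    intro m
    have := hx m
    omega
  -- subset 1 : {σ ∈ S, σ q ≠ jb} ⊆ {σ ∈ Sp, σ q ≠ ju}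
  have hmemS : ∀ σ : Equiv.Perm (Fin (d + r)), σ ∈ S ↔
      ∀ k, x k ≤ (σ k : ℕ) + 1 ∧ (σ k : ℕ) + 1 ≤ x k + d - 1 := by
    intro σ; simp [hS]
  have hmemSp : ∀ σ : Equiv.Perm (Fin (d + r)), σ ∈ Sp ↔
      ∀ k, xP k ≤ (σ k : ℕ) + 1 ∧ (σ k : ℕ) + 1 ≤ xP k + d - 1 := by
    intro σ; simp [hSp]
  have hmemSm : ∀ σ : Equiv.Perm (Fin (d + r)), σ ∈ Sm ↔
      ∀ k, xM k ≤ (σ k : ℕ) + 1 ∧ (σ k : ℕ) + 1 ≤ xM k + d - 1 := by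
    intro σ; simp [hSm]
  have hsub1 : S.filter (fun σ => ¬ σ q = jb) ⊆ Sp.filter (fun σ => ¬ σ q = ju) := by
    intro σ hσ
    rw [Finset.mem_filter] at hσ
    obtain ⟨hσS, hσq⟩ := hσ
    rw [hmemS] at hσS
    have hq1 : (σ q : ℕ) ≠ c - 1 := by
      intro h; exact hσq (Fin.ext (by rw [h, hjb]))
    have hq2 := hσS q
    rw [hxq] at hq2
    rw [Finset.mem_filter, hmemSp]
    constructor
    · intro m
      by_cases hm : m = q
      · subst hm
        rw [hxP, Function.update_self, hxq]
        omega
      · rw [hxP, Function.update_of_ne hm]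
        exact hσS m
    · intro h
      have : (σ q : ℕ) = c + d - 1 := by rw [h, hju]
      omega
  -- subset 3 : {σ ∈ S, σ p ≠ jt} ⊆ {σ ∈ Sm, σ p ≠ ja}
  have hsub3 : S.filter (fun σ => ¬ σ p = jt) ⊆ Sm.filter (fun σ => ¬ σ p = ja) := by
    intro σ hσ
    rw [Finset.mem_filter] at hσ
    obtain ⟨hσS, hσp⟩ := hσ
    rw [hmemS] at hσS
    have hp1 : (σ p : ℕ) ≠ c + d - 2 := by
      intro h; exact hσp (Fin.ext (by rw [h, hjt]))
    have hp2 := hσS p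
    rw [hxp] at hp2
    rw [Finset.mem_filter, hmemSm]
    constructor
    · intro m
      by_cases hm : m = p
      · subst hm
        rw [hxM, Function.update_self, hxp]
        omega
      · rw [hxM, Function.update_of_ne hm]
        exact hσS m
    · intro h
      have : (σ p : ℕ) = c - 2 := by rw [h, hja]
      omega
  have hinj2 : (S.filter (fun σ => σ p = jt)).card ≤ (Sp.filter (fun σ => σ q = ju)).card := by
    apply Finset.card_le_card_of_injOn
      (fun σ => ((Equiv.swap q (σ.symm ju)).trans (Equiv.swap q p)).trans σ)
    · intro σ hσ
      rw [Finset.mem_coe, Finset.mem_filter] at hσ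
      obtain ⟨hσS, hσp⟩ := hσ
      rw [hmemS] at hσS
      set k := σ.symm ju with hkdef
      have hk : σ k = ju := σ.apply_symm_apply ju
      have hkq : k ≠ q := by
        intro h
        have h1 : σ q = ju := h ▸ hk
        have h2' : (σ q : ℕ) = c + d - 1 := by rw [h1, hju]
        have h3 := hσS q; rw [hxq] at h3; omega
      have hkp : k ≠ p := by
        intro h
        have h1 : σ p = ju := h ▸ hk
        have h2' : (σ p : ℕ) = c + d - 1 := by rw [h1, hju]
        have h3 : (σ p : ℕ) = c + d - 2 := by rw [hσp, hjt]
        omega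
      have hxk : c + 1 ≤ x k ∧ x k ≤ r + 1 := by
        have h3 := hσS k
        have h4 : (σ k : ℕ) = c + d - 1 := by rw [hk, hju]
        have h5 := hvalid k
        omega
      have e_q : (((Equiv.swap q k).trans (Equiv.swap q p)).trans σ) q = ju := by
        simp only [Equiv.trans_apply]
        rw [Equiv.swap_apply_left, Equiv.swap_apply_of_ne_of_ne hkq hkp, hk]
      rw [Finset.mem_coe, Finset.mem_filter, hmemSp]
      refine ⟨fun m => ?_, e_q⟩
      simp only [Equiv.trans_apply]
      by_cases hmq : m = q
      · subst hmq
        have hv : ((σ (Equiv.swap q p (Equiv.swap q k q))) : ℕ) = c + d - 1 := by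
          rw [Equiv.swap_apply_left, Equiv.swap_apply_of_ne_of_ne hkq hkp, hk, hju]
        rw [hxP, Function.update_self, hxq, hv]
        omega
      · by_cases hmk : m = k
        · subst hmk
          have hv : ((σ (Equiv.swap q p (Equiv.swap q k k))) : ℕ) = c + d - 2 := by
            rw [Equiv.swap_apply_right, Equiv.swap_apply_left, hσp, hjt]
          rw [hxP, Function.update_of_ne hkq, hv]
          omega
        · by_cases hmp : m = p
          · subst hmp
            have hv : σ (Equiv.swap q p (Equiv.swap q k p)) = σ q := by
              rw [Equiv.swap_apply_of_ne_of_ne hmq hmk, Equiv.swap_apply_right]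
            have h3 := hσS q; rw [hxq] at h3
            rw [hxP, Function.update_of_ne hmq, hxp, hv]
            exact h3
          · have hv : σ (Equiv.swap q p (Equiv.swap q k m)) = σ m := by
              rw [Equiv.swap_apply_of_ne_of_ne hmq hmk, Equiv.swap_apply_of_ne_of_ne hmq hmp]
            rw [hxP, Function.update_of_ne hmq, hv]
            exact hσS m
    · intro σ1 h1 σ2 h2 heq
      beta_reduce at heq
      simp only [Finset.coe_filter, Set.mem_setOf_eq] at h1 h2
      obtain ⟨hσ1S, hσ1p⟩ := h1
      obtain ⟨hσ2S, hσ2p⟩ := h2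
      rw [hmemS] at hσ1S hσ2S
      have key : ∀ σ : Equiv.Perm (Fin (d + r)),
          (∀ m, x m ≤ (σ m : ℕ) + 1 ∧ (σ m : ℕ) + 1 ≤ x m + d - 1) → σ p = jt →
          (((Equiv.swap q (σ.symm ju)).trans (Equiv.swap q p)).trans σ) (σ.symm ju) = jt := by
        intro σ hσS hσp
        set k := σ.symm ju with hkdef
        have hk : σ k = ju := σ.apply_symm_apply ju
        have hkq : k ≠ q := by
          intro h
          have ha : σ q = ju := h ▸ hk
          have hb : (σ q : ℕ) = c + d - 1 := by rw [ha, hju]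
          have h3 := hσS q; rw [hxq] at h3; omega
        simp only [Equiv.trans_apply]
        rw [Equiv.swap_apply_right, Equiv.swap_apply_left, hσp]
      have ek1 := key σ1 hσ1S hσ1p
      have ek2 := key σ2 hσ2S hσ2p
      have hkk : σ1.symm ju = σ2.symm ju := by
        apply (((Equiv.swap q (σ1.symm ju)).trans (Equiv.swap q p)).trans σ1).injective
        rw [ek1, heq, ek2]
      rw [hkk] at heq
      refine Equiv.ext fun m => ?_
      have h'' := DFunLike.congr_fun heq
        (((Equiv.swap q (σ2.symm ju)).trans (Equiv.swap q p)).symm m)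
      simpa using h''
  have hinj4 : (S.filter (fun σ => σ q = jb)).card ≤ (Sm.filter (fun σ => σ p = ja)).card := by
    apply Finset.card_le_card_of_injOn
      (fun σ => ((Equiv.swap p (σ.symm ja)).trans (Equiv.swap p q)).trans σ)
    · intro σ hσ
      rw [Finset.mem_coe, Finset.mem_filter] at hσ
      obtain ⟨hσS, hσq⟩ := hσ
      rw [hmemS] at hσS
      set k := σ.symm ja with hkdef
      have hk : σ k = ja := σ.apply_symm_apply ja
      have hkp : k ≠ p := by
        intro h
        have h1 : σ p = ja := h ▸ hk
        have h2' : (σ p : ℕ) = c - 2 := by rw [h1, hja]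
        have h3 := hσS p; rw [hxp] at h3; omega
      have hkq : k ≠ q := by
        intro h
        have h1 : σ q = ja := h ▸ hk
        have h2' : (σ q : ℕ) = c - 2 := by rw [h1, hja]
        have h3 : (σ q : ℕ) = c - 1 := by rw [hσq, hjb]
        omega
      have e_p : (((Equiv.swap p k).trans (Equiv.swap p q)).trans σ) p = ja := by
        simp only [Equiv.trans_apply]
        rw [Equiv.swap_apply_left, Equiv.swap_apply_of_ne_of_ne hkp hkq, hk]
      rw [Finset.mem_coe, Finset.mem_filter, hmemSm]
      refine ⟨fun m => ?_, e_p⟩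
      simp only [Equiv.trans_apply]
      by_cases hmp : m = p
      · subst hmp
        have hv : ((σ (Equiv.swap p q (Equiv.swap p k p))) : ℕ) = c - 2 := by
          rw [Equiv.swap_apply_left, Equiv.swap_apply_of_ne_of_ne hkp hkq, hk, hja]
        rw [hxM, Function.update_self, hxp, hv]
        omega
      · by_cases hmk : m = k
        · subst hmk
          have hv : ((σ (Equiv.swap p q (Equiv.swap p k k))) : ℕ) = c - 1 := by
            rw [Equiv.swap_apply_right, Equiv.swap_apply_left, hσq, hjb]
          have h3 := hσS k
          have h4 : (σ k : ℕ) = c - 2 := by rw [hk, hja]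
          rw [hxM, Function.update_of_ne hkp, hv]
          omega
        · by_cases hmq : m = q
          · subst hmq
            have hv : σ (Equiv.swap p q (Equiv.swap p k q)) = σ p := by
              rw [Equiv.swap_apply_of_ne_of_ne hmp hmk, Equiv.swap_apply_right]
            have h3 := hσS p; rw [hxp] at h3
            rw [hxM, Function.update_of_ne hmp, hxq, hv]
            exact h3
          · have hv : σ (Equiv.swap p q (Equiv.swap p k m)) = σ m := by
              rw [Equiv.swap_apply_of_ne_of_ne hmp hmk, Equiv.swap_apply_of_ne_of_ne hmp hmq]
            rw [hxM, Function.update_of_ne hmp, hv]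
            exact hσS m
    · intro σ1 h1 σ2 h2 heq
      beta_reduce at heq
      simp only [Finset.coe_filter, Set.mem_setOf_eq] at h1 h2
      obtain ⟨hσ1S, hσ1q⟩ := h1
      obtain ⟨hσ2S, hσ2q⟩ := h2
      rw [hmemS] at hσ1S hσ2S
      have key : ∀ σ : Equiv.Perm (Fin (d + r)),
          (∀ m, x m ≤ (σ m : ℕ) + 1 ∧ (σ m : ℕ) + 1 ≤ x m + d - 1) → σ q = jb →
          (((Equiv.swap p (σ.symm ja)).trans (Equiv.swap p q)).trans σ) (σ.symm ja) = jb := by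
        intro σ hσS hσq
        set k := σ.symm ja with hkdef
        have hk : σ k = ja := σ.apply_symm_apply ja
        have hkp : k ≠ p := by
          intro h
          have ha : σ p = ja := h ▸ hk
          have hb : (σ p : ℕ) = c - 2 := by rw [ha, hja]
          have h3 := hσS p; rw [hxp] at h3; omega
        simp only [Equiv.trans_apply]
        rw [Equiv.swap_apply_right, Equiv.swap_apply_left, hσq]
      have ek1 := key σ1 hσ1S hσ1q
      have ek2 := key σ2 hσ2S hσ2q
      have hkk : σ1.symm ja = σ2.symm ja := by
        apply (((Equiv.swap p (σ1.symm ja)).trans (Equiv.swap p q)).trans σ1).injective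
        rw [ek1, heq, ek2]
      rw [hkk] at heq
      refine Equiv.ext fun m => ?_
      have h'' := DFunLike.congr_fun heq
        (((Equiv.swap p (σ2.symm ja)).trans (Equiv.swap p q)).symm m)
      simpa using h''
  have e1 := Finset.card_filter_add_card_filter_not (s := S)
      (p := fun σ => σ q = jb)
  have e2 := Finset.card_filter_add_card_filter_not (s := S)
      (p := fun σ => σ p = jt)
  have e3 := Finset.card_filter_add_card_filter_not (s := Sp)
      (p := fun σ => σ q = ju)
  have e4 := Finset.card_filter_add_card_filter_not (s := Sm)
      (p := fun σ => σ p = ja)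
  beta_reduce at e1 e2 e3 e4
  have c1 := Finset.card_le_card hsub1
  have c3 := Finset.card_le_card hsub3
  rw [hperS, hperP, hperM]
  omega
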